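/- Let X = ℓ²(ℕ, ℂ) viewed as the Hilbert space direct sum of ℂⁱ, i = 1, 2, …, and let A act blockwise by A_i = −I_i + N_i where N_i ∈ ℂ^{i×i} is the standard nilpotent shift (ones on the superdiagonal, zeros elsewhere). Then A is a bounded linear operator on X with ‖A‖ ≤ 2, and its spectrum is σ(A) = closure of the ball of radius 1 centered at −1 in ℂ. -/

import Mathlib

open Matrix Finset

set_option maxHeartbeats 1000000
set_option synthInstance.maxHeartbeats 1000000

/-- The nilpotent shift matrix `N_i` (ones on the superdiagonal). -/
noncomputable def Nmat (n : ℕ) : Matrix (Fin (n+1)) (Fin (n+1)) ℂ :=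
  Matrix.of fun j k => if (j : ℕ) + 1 = (k : ℕ) then 1 else 0

/-- The block `A_i = -I_i + N_i`. -/
noncomputable def Amat (n : ℕ) : Matrix (Fin (n+1)) (Fin (n+1)) ℂ := -1 + Nmat n

/-- The Hilbert space `X = ⨁_{i≥1} ℂⁱ` (ℓ²-direct sum). -/
noncomputable abbrev Xsp : Type := lp (fun i : ℕ => EuclideanSpace ℂ (Fin (i+1))) 2

/-! ### Blockwise operators on `Xsp` -/

lemma ptBound {E F : Type*} [NormedAddCommGroup E] [NormedAddCommGroup F]
    [NormedSpace ℂ E] [NormedSpace ℂ F]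
    (f : E →L[ℂ] F) {C : ℝ} (hC : 0 ≤ C) (hf : ‖f‖ ≤ C) (v : E) :
    ‖f v‖ ^ (2 : ENNReal).toReal ≤ C ^ 2 * ‖v‖ ^ (2 : ENNReal).toReal := by
  have h1 : ‖f v‖ ≤ C * ‖v‖ := f.le_of_opNorm_le hf _
  have h2 : (0:ℝ) ≤ ‖v‖ := norm_nonneg _
  have ht : (2 : ENNReal).toReal = 2 := by simp
  rw [ht]
  calc ‖f v‖ ^ (2:ℝ) ≤ (C * ‖v‖) ^ (2:ℝ) :=
        Real.rpow_le_rpow (norm_nonneg _) h1 (by norm_num)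
    _ = C ^ 2 * ‖v‖ ^ (2:ℝ) := by
        rw [Real.mul_rpow hC h2]
        norm_num

lemma blockMem (f : ∀ i : ℕ, EuclideanSpace ℂ (Fin (i+1)) →L[ℂ] EuclideanSpace ℂ (Fin (i+1)))
    {C : ℝ} (hC : 0 ≤ C) (hf : ∀ i, ‖f i‖ ≤ C) (x : Xsp) :
    Memℓp (fun i => f i (x i)) (2 : ENNReal) := by
  apply memℓp_gen
  have hs : Summable fun i => ‖x i‖ ^ (2 : ENNReal).toReal := (lp.memℓp x).summable (by norm_num)
  exact Summable.of_nonneg_of_le (fun i => by positivity)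
    (fun i => ptBound (f i) hC (hf i) (x i)) (hs.mul_left (C^2))

noncomputable def blockOp (f : ∀ i : ℕ, EuclideanSpace ℂ (Fin (i+1)) →L[ℂ] EuclideanSpace ℂ (Fin (i+1)))
    {C : ℝ} (hC : 0 ≤ C) (hf : ∀ i, ‖f i‖ ≤ C) : Xsp →L[ℂ] Xsp :=
  LinearMap.mkContinuous
    { toFun := fun x => ⟨fun i => f i (x i), blockMem f hC hf x⟩
      map_add' := fun x y => by
        apply lp.ext; funext i; simp [lp.coeFn_add]; rfl
      map_smul' := fun c x => by
        apply lp.ext; funext i; simp [lp.coeFn_smul] }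
    C
    (fun x => by
      dsimp
      apply lp.norm_le_of_tsum_le (p := 2) (by norm_num) (by positivity)
      have hs : Summable fun i => ‖x i‖ ^ (2 : ENNReal).toReal :=
        (lp.memℓp x).summable (by norm_num)
      have hb := blockMem f hC hf x
      calc (∑' i, ‖f i (x i)‖ ^ (2:ENNReal).toReal)
          ≤ ∑' i, C ^ 2 * ‖x i‖ ^ (2:ENNReal).toReal :=
            Summable.tsum_le_tsum (fun i => ptBound (f i) hC (hf i) (x i))
              (hb.summable (by norm_num)) (hs.mul_left _)
        _ = C ^ 2 * ∑' i, ‖x i‖ ^ (2:ENNReal).toReal := tsum_mul_left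
        _ = C ^ 2 * ‖x‖ ^ (2:ENNReal).toReal := by
            rw [lp.norm_rpow_eq_tsum (by norm_num) x]
        _ = (C * ‖x‖) ^ (2:ENNReal).toReal := by
            have ht : (2 : ENNReal).toReal = 2 := by simp
            rw [ht, Real.mul_rpow hC (norm_nonneg _)]
            norm_num)

@[simp] lemma blockOp_apply (f : ∀ i : ℕ, EuclideanSpace ℂ (Fin (i+1)) →L[ℂ] EuclideanSpace ℂ (Fin (i+1)))
    {C : ℝ} (hC : 0 ≤ C) (hf : ∀ i, ‖f i‖ ≤ C) (x : Xsp) (i : ℕ) :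
    blockOp f hC hf x i = f i (x i) := rfl

lemma blockOp_norm_le (f : ∀ i : ℕ, EuclideanSpace ℂ (Fin (i+1)) →L[ℂ] EuclideanSpace ℂ (Fin (i+1)))
    {C : ℝ} (hC : 0 ≤ C) (hf : ∀ i, ‖f i‖ ≤ C) : ‖blockOp f hC hf‖ ≤ C :=
  LinearMap.mkContinuous_norm_le _ hC _

/-! ### Facts about `Nmat` -/

lemma Nmat_pow (n m : ℕ) (j k : Fin (n+1)) :
    (Nmat n ^ m) j k = if (j : ℕ) + m = (k : ℕ) then 1 else 0 := by
  induction m generalizing k with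
  | zero => simp [Matrix.one_apply, Fin.ext_iff, eq_comm]
  | succ m ih =>
    rw [pow_succ, Matrix.mul_apply]
    rw [Finset.sum_congr rfl (fun l _ => by rw [ih l])]
    simp only [Nmat, Matrix.of_apply]
    by_cases h : (j:ℕ) + m ≤ n
    · rw [Finset.sum_eq_single (⟨(j:ℕ)+m, by omega⟩ : Fin (n+1))]
      · simp [add_assoc]
      · intro l _ hl
        have : ¬((j:ℕ) + m = (l:ℕ)) := fun hc => hl (by simp [Fin.ext_iff]; omega)
        simp [this]
      · simp
    · have hk : ¬((j:ℕ) + (m+1) = (k:ℕ)) := by have := k.isLt; omega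
      rw [if_neg hk]
      apply Finset.sum_eq_zero
      intro l _
      have : ¬((j:ℕ) + m = (l:ℕ)) := by have := l.isLt; omega
      simp [this]

lemma Nmat_pow_eq_zero (n : ℕ) : Nmat n ^ (n+1) = 0 := by
  ext j k
  rw [Nmat_pow]
  have : ¬ ((j:ℕ) + (n+1) = (k:ℕ)) := by have := k.isLt; omega
  simp [this]

lemma Nmat_mulVec_castSucc (n : ℕ) (v : Fin (n+1) → ℂ) (j : Fin n) :
    (Nmat n *ᵥ v) j.castSucc = v j.succ := by
  simp only [Matrix.mulVec, dotProduct, Nmat, Matrix.of_apply]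
  rw [Finset.sum_congr rfl (fun k _ => ?_), Finset.sum_ite_eq' Finset.univ j.succ v]
  · simp
  · congr 1
    simp [Fin.ext_iff, eq_comm]

lemma Nmat_mulVec_last (n : ℕ) (v : Fin (n+1) → ℂ) :
    (Nmat n *ᵥ v) (Fin.last n) = 0 := by
  simp only [Matrix.mulVec, dotProduct, Nmat, Matrix.of_apply]
  apply Finset.sum_eq_zero
  intro k _
  have : ¬ (n + 1 = (k:ℕ)) := by have := k.isLt; omega
  simp [this]

lemma euclid_clm_apply {m : ℕ} (M : Matrix (Fin m) (Fin m) ℂ) (v : EuclideanSpace ℂ (Fin m))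
    (j : Fin m) : Matrix.toEuclideanCLM (𝕜 := ℂ) M v j = (M *ᵥ ⇑v) j := rfl

lemma Nclm_norm_le (n : ℕ) : ‖Matrix.toEuclideanCLM (𝕜 := ℂ) (Nmat n)‖ ≤ 1 := by
  apply ContinuousLinearMap.opNorm_le_bound _ (by norm_num)
  intro v
  rw [one_mul, EuclideanSpace.norm_eq, EuclideanSpace.norm_eq]
  apply Real.sqrt_le_sqrt
  simp only [euclid_clm_apply]
  rw [Fin.sum_univ_castSucc (f := fun j => ‖(Nmat n *ᵥ ⇑v) j‖^2),
      Fin.sum_univ_succ (f := fun k => ‖v k‖ ^ 2)]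
  simp only [Nmat_mulVec_castSucc, Nmat_mulVec_last, norm_zero]
  have h0 : (0:ℝ) ≤ ‖v 0‖^2 := by positivity
  nlinarith [h0]

/-! ### The block resolvent -/

noncomputable def Bmat (n : ℕ) (μ : ℂ) : Matrix (Fin (n+1)) (Fin (n+1)) ℂ :=
  μ⁻¹ • ∑ k ∈ range (n+1), (μ⁻¹ • Nmat n) ^ k

lemma smul_one_sub_eq (n : ℕ) {μ : ℂ} (hμ : μ ≠ 0) :
    μ • (1 - μ⁻¹ • Nmat n) = μ • (1 : Matrix (Fin (n+1)) (Fin (n+1)) ℂ) - Nmat n := by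
  rw [smul_sub, smul_smul, mul_inv_cancel₀ hμ, one_smul]

lemma Bmat_mul (n : ℕ) {μ : ℂ} (hμ : μ ≠ 0) :
    (μ • (1 : Matrix (Fin (n+1)) (Fin (n+1)) ℂ) - Nmat n) * Bmat n μ = 1 := by
  rw [← smul_one_sub_eq n hμ, Bmat, Algebra.smul_mul_assoc, Algebra.mul_smul_comm,
    smul_smul, mul_inv_cancel₀ hμ, one_smul]
  have h := mul_geom_sum (μ⁻¹ • Nmat n) (n+1)
  have hz : (μ⁻¹ • Nmat n) ^ (n+1) = 0 := by
    rw [smul_pow, Nmat_pow_eq_zero]; simp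
  have : (1 - μ⁻¹ • Nmat n) * ∑ k ∈ range (n+1), (μ⁻¹ • Nmat n) ^ k
      = -((μ⁻¹ • Nmat n - 1) * ∑ k ∈ range (n+1), (μ⁻¹ • Nmat n) ^ k) := by
    rw [← neg_mul, neg_sub]
  rw [this, h, hz]
  simp

lemma mul_Bmat (n : ℕ) {μ : ℂ} (hμ : μ ≠ 0) :
    Bmat n μ * (μ • (1 : Matrix (Fin (n+1)) (Fin (n+1)) ℂ) - Nmat n) = 1 := by
  rw [← smul_one_sub_eq n hμ, Bmat, Algebra.smul_mul_assoc, Algebra.mul_smul_comm,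
    smul_smul, inv_mul_cancel₀ hμ, one_smul]
  have h := geom_sum_mul (μ⁻¹ • Nmat n) (n+1)
  have hz : (μ⁻¹ • Nmat n) ^ (n+1) = 0 := by
    rw [smul_pow, Nmat_pow_eq_zero]; simp
  have : (∑ k ∈ range (n+1), (μ⁻¹ • Nmat n) ^ k) * (1 - μ⁻¹ • Nmat n)
      = -((∑ k ∈ range (n+1), (μ⁻¹ • Nmat n) ^ k) * (μ⁻¹ • Nmat n - 1)) := by
    rw [← mul_neg, neg_sub]
  rw [this, h, hz]
  simp

lemma clm_pow_norm_le {E : Type*} [NormedAddCommGroup E] [NormedSpace ℂ E]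
    (a : E →L[ℂ] E) {c : ℝ} (h : ‖a‖ ≤ c) : ∀ k : ℕ, ‖a ^ k‖ ≤ c ^ k := by
  have hc : 0 ≤ c := le_trans (norm_nonneg _) h
  intro k
  induction k with
  | zero => rw [pow_zero, pow_zero]; exact ContinuousLinearMap.norm_id_le
  | succ k ih =>
    rw [pow_succ, pow_succ]
    exact (norm_mul_le _ _).trans (mul_le_mul ih h (norm_nonneg _) (by positivity))

lemma Bclm_norm_le (n : ℕ) {μ : ℂ} (hμ : 1 < ‖μ‖) :
    ‖Matrix.toEuclideanCLM (𝕜 := ℂ) (Bmat n μ)‖ ≤ ‖μ‖⁻¹ / (1 - ‖μ‖⁻¹) := by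
  have hμ0 : μ ≠ 0 := by intro h; rw [h] at hμ; simp at hμ; linarith
  have ht0 : (0:ℝ) ≤ ‖μ‖⁻¹ := by positivity
  have ht1 : ‖μ‖⁻¹ < 1 := by
    rw [inv_lt_one_iff₀]; right; exact hμ
  rw [Bmat, _root_.map_smul, map_sum]
  calc ‖μ⁻¹ • ∑ k ∈ range (n+1), Matrix.toEuclideanCLM (𝕜 := ℂ) ((μ⁻¹ • Nmat n) ^ k)‖
      ≤ ‖μ‖⁻¹ * ∑ k ∈ range (n+1), ‖μ‖⁻¹ ^ k := by
        refine (norm_smul_le μ⁻¹ (∑ k ∈ range (n+1), Matrix.toEuclideanCLM (𝕜 := ℂ) ((μ⁻¹ • Nmat n) ^ k))).trans ?_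
        rw [norm_inv]
        apply mul_le_mul_of_nonneg_left _ ht0
        refine (norm_sum_le _ _).trans (Finset.sum_le_sum fun k _ => ?_)
        rw [map_pow, _root_.map_smul]
        apply clm_pow_norm_le
        refine (norm_smul_le μ⁻¹ (Matrix.toEuclideanCLM (𝕜 := ℂ) (Nmat n))).trans ?_
        rw [norm_inv]
        calc ‖μ‖⁻¹ * ‖Matrix.toEuclideanCLM (𝕜 := ℂ) (Nmat n)‖ ≤ ‖μ‖⁻¹ * 1 :=
              mul_le_mul_of_nonneg_left (Nclm_norm_le n) ht0
          _ = ‖μ‖⁻¹ := mul_one _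
    _ ≤ ‖μ‖⁻¹ * (1 - ‖μ‖⁻¹)⁻¹ := by
        apply mul_le_mul_of_nonneg_left _ ht0
        have hsum : ∑' k : ℕ, ‖μ‖⁻¹ ^ k = (1 - ‖μ‖⁻¹)⁻¹ :=
          tsum_geometric_of_lt_one ht0 ht1
        rw [← hsum]
        exact Summable.sum_le_tsum _ (fun k _ => by positivity) (summable_geometric_of_lt_one ht0 ht1)
    _ = ‖μ‖⁻¹ / (1 - ‖μ‖⁻¹) := by rw [div_eq_mul_inv]

lemma Aclm_norm_le (i : ℕ) : ‖Matrix.toEuclideanCLM (𝕜 := ℂ) (Amat i)‖ ≤ 2 := by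
  rw [Amat, map_add, map_neg, _root_.map_one]
  refine (norm_add_le _ _).trans ?_
  have h1 : ‖-(1 : EuclideanSpace ℂ (Fin (i+1)) →L[ℂ] EuclideanSpace ℂ (Fin (i+1)))‖ ≤ 1 := by
    rw [norm_neg]
    simpa using ContinuousLinearMap.norm_id_le
  linarith [Nclm_norm_le i]

noncomputable def Aop : Xsp →L[ℂ] Xsp :=
  blockOp (fun i => Matrix.toEuclideanCLM (𝕜 := ℂ) (Amat i)) (by norm_num) Aclm_norm_le

lemma Aop_apply (x : Xsp) (i : ℕ) : Aop x i = Matrix.toEuclideanLin (Amat i) (x i) := by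
  rw [Aop, blockOp_apply, ← Matrix.coe_toEuclideanCLM_eq_toEuclideanLin]
  rfl

lemma matrix_id (i : ℕ) (lam : ℂ) :
    lam • (1 : Matrix (Fin (i+1)) (Fin (i+1)) ℂ) - Amat i
      = (lam + 1) • 1 - Nmat i := by
  rw [Amat, add_smul, one_smul]
  abel

lemma resolvent_block (lam : ℂ) (x : Xsp) (i : ℕ) :
    ((algebraMap ℂ (Xsp →L[ℂ] Xsp) lam - Aop) x) i
      = Matrix.toEuclideanCLM (𝕜 := ℂ) ((lam + 1) • 1 - Nmat i) (x i) := by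
  rw [Algebra.algebraMap_eq_smul_one]
  have h1 : ((lam • (1 : Xsp →L[ℂ] Xsp) - Aop) x) = lam • x - Aop x := by
    simp [ContinuousLinearMap.sub_apply, ContinuousLinearMap.smul_apply,
      ContinuousLinearMap.one_apply]
  rw [h1, ← matrix_id i lam]
  have h2 : ((lam • x - Aop x : Xsp) : ∀ j, EuclideanSpace ℂ (Fin (j+1))) i
      = lam • (x i) - Aop x i := by
    simp [lp.coeFn_sub, lp.coeFn_smul]; rfl
  rw [h2, Aop, blockOp_apply, map_sub, _root_.map_smul, _root_.map_one]
  rfl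

lemma isUnit_of_far (lam : ℂ) (hμ : 1 < ‖lam + 1‖) :
    IsUnit (algebraMap ℂ (Xsp →L[ℂ] Xsp) lam - Aop) := by
  set μ := lam + 1 with hμdef
  have hμ0 : μ ≠ 0 := by
    intro h; rw [h] at hμ; simp at hμ; linarith
  have ht1 : ‖μ‖⁻¹ < 1 := by rw [inv_lt_one_iff₀]; right; exact hμ
  have hC : (0:ℝ) ≤ ‖μ‖⁻¹ / (1 - ‖μ‖⁻¹) := by
    apply div_nonneg (by positivity); linarith
  set B := blockOp (fun i => Matrix.toEuclideanCLM (𝕜 := ℂ) (Bmat i μ)) hC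
    (fun i => Bclm_norm_le i hμ) with hBdef
  rw [isUnit_iff_exists]
  refine ⟨B, ?_, ?_⟩
  · refine ContinuousLinearMap.ext fun x => ?_
    rw [ContinuousLinearMap.mul_apply, ContinuousLinearMap.one_apply]
    apply lp.ext; funext i
    rw [resolvent_block, hBdef, blockOp_apply, ← ContinuousLinearMap.comp_apply,
      ← ContinuousLinearMap.mul_def, ← _root_.map_mul, Bmat_mul i hμ0, _root_.map_one,
      ContinuousLinearMap.one_apply]
  · refine ContinuousLinearMap.ext fun x => ?_
    rw [ContinuousLinearMap.mul_apply, ContinuousLinearMap.one_apply]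
    apply lp.ext; funext i
    rw [hBdef, blockOp_apply, resolvent_block, ← ContinuousLinearMap.comp_apply,
      ← ContinuousLinearMap.mul_def, ← _root_.map_mul, mul_Bmat i hμ0, _root_.map_one,
      ContinuousLinearMap.one_apply]

noncomputable def Wfam (μ : ℂ) : ∀ i : ℕ, EuclideanSpace ℂ (Fin (i+1)) :=
  fun i => (WithLp.equiv 2 (Fin (i+1) → ℂ)).symm (fun j => μ ^ (j : ℕ))

noncomputable def Ufam (μ : ℂ) : ∀ i : ℕ, EuclideanSpace ℂ (Fin (i+1)) :=
  fun i => Matrix.toEuclideanCLM (𝕜 := ℂ) (μ • 1 - Nmat i) (Wfam μ i)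

lemma Wfam_apply (μ : ℂ) (i : ℕ) (j : Fin (i+1)) : Wfam μ i j = μ ^ (j : ℕ) := rfl

lemma Ufam_eq (μ : ℂ) (n : ℕ) :
    Ufam μ n = EuclideanSpace.single (Fin.last n) (μ ^ (n+1)) := by
  apply (WithLp.equiv 2 (Fin (n+1) → ℂ)).injective
  funext j
  have hcomp : Ufam μ n j = μ * (Wfam μ n j) - (Nmat n *ᵥ ⇑(Wfam μ n)) j := by
    rw [Ufam, euclid_clm_apply, Matrix.sub_mulVec, Matrix.smul_mulVec, Matrix.one_mulVec]
    rfl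
  show Ufam μ n j = EuclideanSpace.single (Fin.last n) (μ ^ (n+1)) j
  induction j using Fin.lastCases with
  | last =>
    rw [hcomp, Nmat_mulVec_last, Wfam_apply, EuclideanSpace.single_apply, if_pos rfl]
    simp [Fin.last, pow_succ]; ring
  | cast j' =>
    rw [hcomp, Nmat_mulVec_castSucc, EuclideanSpace.single_apply,
      if_neg (Fin.castSucc_lt_last j').ne]
    show μ * (Wfam μ n j'.castSucc) - Wfam μ n j'.succ = 0
    rw [Wfam_apply, Wfam_apply]
    simp [Fin.coe_castSucc, Fin.val_succ, pow_succ]; ring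

lemma Wfam_norm_ge_one (μ : ℂ) (n : ℕ) : 1 ≤ ‖Wfam μ n‖ := by
  rw [EuclideanSpace.norm_eq]
  have h0 : (1:ℝ) = Real.sqrt 1 := by simp
  rw [h0]
  apply Real.sqrt_le_sqrt
  have hmem : (0 : Fin (n+1)) ∈ Finset.univ := Finset.mem_univ _
  have := Finset.single_le_sum (f := fun j : Fin (n+1) => ‖Wfam μ n j‖^2)
    (fun j _ => by positivity) hmem
  simpa [Wfam_apply] using this

lemma Wfam_norm_ge (μ : ℂ) (n : ℕ) (h1 : ‖μ‖ ≤ 1) :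
    Real.sqrt (n+1) * ‖μ‖^n ≤ ‖Wfam μ n‖ := by
  rw [EuclideanSpace.norm_eq]
  have key : ((n:ℝ)+1) * (‖μ‖^n)^2 ≤ ∑ j : Fin (n+1), ‖Wfam μ n j‖^2 := by
    have := Finset.card_nsmul_le_sum (Finset.univ : Finset (Fin (n+1)))
      (fun j => ‖Wfam μ n j‖^2) ((‖μ‖^n)^2) (fun j _ => by
        dsimp only
        rw [Wfam_apply, norm_pow]
        have hj : (j:ℕ) ≤ n := Nat.lt_succ_iff.mp j.isLt
        have := pow_le_pow_of_le_one (norm_nonneg μ) h1 hj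
        nlinarith [pow_nonneg (norm_nonneg μ) (j:ℕ), pow_nonneg (norm_nonneg μ) n])
    simpa [nsmul_eq_mul, Nat.cast_add] using this
  calc Real.sqrt (n+1) * ‖μ‖^n = Real.sqrt (((n:ℝ)+1) * (‖μ‖^n)^2) := by
        rw [Real.sqrt_mul (by positivity), Real.sqrt_sq (by positivity)]
    _ ≤ _ := Real.sqrt_le_sqrt key

lemma mem_spectrum_of_close (lam : ℂ) (h : ‖lam + 1‖ ≤ 1) : lam ∈ spectrum ℂ Aop := by
  rw [spectrum.mem_iff]
  intro hu
  set μ := lam + 1 with hμdef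
  obtain ⟨u, hu⟩ := hu
  set B := ((↑u⁻¹ : Xsp →L[ℂ] Xsp)) with hB
  have hBmul : B * (algebraMap ℂ (Xsp →L[ℂ] Xsp) lam - Aop) = 1 := by
    rw [← hu, hB, Units.inv_mul]
  have key : ∀ v : Xsp, ‖v‖ ≤ ‖B‖ * ‖(algebraMap ℂ (Xsp →L[ℂ] Xsp) lam - Aop) v‖ := by
    intro v
    have : v = B ((algebraMap ℂ (Xsp →L[ℂ] Xsp) lam - Aop) v) := by
      rw [← ContinuousLinearMap.mul_apply, hBmul, ContinuousLinearMap.one_apply]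
    conv_lhs => rw [this]
    exact B.le_opNorm _
  obtain ⟨n, hn⟩ := exists_nat_gt (‖B‖^2)
  have hsq : ‖B‖ < Real.sqrt (n+1) := by
    have h1 : ‖B‖ = Real.sqrt (‖B‖^2) := (Real.sqrt_sq (norm_nonneg _)).symm
    rw [h1]
    apply Real.sqrt_lt_sqrt (by positivity)
    push_cast; linarith
  have hsingle : (algebraMap ℂ (Xsp →L[ℂ] Xsp) lam - Aop) (lp.single 2 n (Wfam μ n))
      = lp.single 2 n (Ufam μ n) := by
    apply lp.ext; funext i
    by_cases hi : i = n
    · subst hi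
      rw [resolvent_block, lp.single_apply_self, lp.single_apply_self, ← hμdef]
      rfl
    · rw [resolvent_block, lp.single_apply_ne _ _ _ hi, lp.single_apply_ne _ _ _ hi, map_zero]
  have hw := key (lp.single 2 n (Wfam μ n))
  rw [hsingle, lp.norm_single (E := fun i : ℕ => EuclideanSpace ℂ (Fin (i+1))) (p := 2) (by norm_num) n (Wfam μ n),
    lp.norm_single (E := fun i : ℕ => EuclideanSpace ℂ (Fin (i+1))) (p := 2) (by norm_num) n (Ufam μ n), Ufam_eq, EuclideanSpace.norm_single,
    norm_pow] at hw
  by_cases hμ0 : μ = 0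
  · have h1 := Wfam_norm_ge_one μ n
    rw [hμ0] at hw
    simp at hw
    rw [hμ0] at h1
    rw [hw] at h1
    norm_num at h1
  · have hμn : 0 < ‖μ‖ := norm_pos_iff.mpr hμ0
    have hμpos : 0 < ‖μ‖^n := by positivity
    have hlow := Wfam_norm_ge μ n h
    have hstep : ‖B‖ * ‖μ‖^(n+1) < Real.sqrt (n+1) * ‖μ‖^n := by
      rw [pow_succ]
      calc ‖B‖ * (‖μ‖^n * ‖μ‖) = (‖B‖ * ‖μ‖) * ‖μ‖^n := by ring
        _ ≤ ‖B‖ * ‖μ‖^n := by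
            apply mul_le_mul_of_nonneg_right _ (le_of_lt hμpos)
            exact mul_le_of_le_one_right (norm_nonneg _) h
        _ < Real.sqrt (n+1) * ‖μ‖^n := mul_lt_mul_of_pos_right hsq hμpos
    linarith


/-- The blockwise operator `A` with blocks `A_i = -I_i + N_i` is a bounded
operator on `X = ℓ²(⨁ ℂⁱ)` with `‖A‖ ≤ 2` and spectrum the closed unit ball
centered at `-1`. -/
theorem blockwise_operator_bounded_and_spectrum :
    ∃ A : Xsp →L[ℂ] Xsp,
      (∀ (x : Xsp) (i : ℕ), A x i = Matrix.toEuclideanLin (Amat i) (x i)) ∧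
      ‖A‖ ≤ 2 ∧
      spectrum ℂ A = Metric.closedBall (-1 : ℂ) 1 := by
  refine ⟨Aop, Aop_apply, blockOp_norm_le _ _ _, ?_⟩
  ext lam
  rw [Metric.mem_closedBall, dist_eq_norm, sub_neg_eq_add]
  constructor
  · intro hs
    by_contra hb
    push_neg at hb
    exact (spectrum.mem_iff.mp hs) (isUnit_of_far lam hb)
  · exact mem_spectrum_of_close lam
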